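/- On the n×n torus (n ≥ 4), let M = {(0,0),(1,0),(1,1),(1,2)} be marked. Then the state |φ_stat^a⟩ = Σ_{i,j}|i,j⟩|s_cᵃ⟩ − (4+l)a(|0,0,→⟩ + |1,0,←⟩ + |1,1,↑⟩ + |1,2,↓⟩) is fixed by the lackadaisical search step: U'|φ_stat^a⟩ = |φ_stat^a⟩ for every real a. -/
import Mathlib


open Matrix

/-- Basis index of the walk space on the `n×n` torus with a 5-dimensional coin:
position `(i,j) ∈ (ℤ/nℤ)²` and coin `c ∈ Fin 5` with `0=↑, 1=↓, 2=←, 3=→, 4=↺`. -/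
abbrev WalkIdx (n : ℕ) := ZMod n × ZMod n × Fin 5

/-- The action of the flip-flop shift with self-loop on basis indices. -/
def shiftIdx (n : ℕ) : WalkIdx n → WalkIdx n
  | (i, j, c) =>
    if c = 0 then (i, j + 1, 1)
    else if c = 1 then (i, j - 1, 0)
    else if c = 2 then (i - 1, j, 3)
    else if c = 3 then (i + 1, j, 2)
    else (i, j, c)

/-- The flip-flop shift operator with self-loop, as a matrix:
`S|i,j,↑⟩=|i,j+1,↓⟩`, `S|i,j,↓⟩=|i,j−1,↑⟩`, `S|i,j,←⟩=|i−1,j,→⟩`,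
`S|i,j,→⟩=|i+1,j,←⟩`, `S|i,j,↺⟩=|i,j,↺⟩` (indices mod `n`). -/
noncomputable def shiftOp (n : ℕ) : Matrix (WalkIdx n) (WalkIdx n) ℂ :=
  fun x y => if x = shiftIdx n y then 1 else 0

/-- The Grover self-loop coin state `|s_c⟩`. -/
noncomputable def scState (l : ℝ) : Fin 5 → ℂ :=
  fun c => if c = 4 then (Real.sqrt l : ℂ) / (Real.sqrt (4 + l) : ℂ)
           else 1 / (Real.sqrt (4 + l) : ℂ)

/-- The 5-dimensional Grover coin `C = 2|s_c⟩⟨s_c| − I₅`. -/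
noncomputable def groverCoin (l : ℝ) : Matrix (Fin 5) (Fin 5) ℂ :=
  (2 : ℂ) • Matrix.vecMulVec (scState l) (star (scState l)) - 1

/-- The coin operator `I ⊗ C` on the full walk space. -/
noncomputable def coinOp (n : ℕ) (l : ℝ) : Matrix (WalkIdx n) (WalkIdx n) ℂ :=
  fun x y => if x.1 = y.1 ∧ x.2.1 = y.2.1 then groverCoin l x.2.2 y.2.2 else 0

/-- One step of the lackadaisical walk (without search): `U = S·(I ⊗ C)`. -/
noncomputable def walkOp (n : ℕ) [NeZero n] (l : ℝ) : Matrix (WalkIdx n) (WalkIdx n) ℂ :=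
  shiftOp n * coinOp n l

/-- The query `Q ⊗ I₅`: flips the sign at the marked vertices `M`. -/
noncomputable def queryOp (n : ℕ) (M : Finset (ZMod n × ZMod n)) :
    Matrix (WalkIdx n) (WalkIdx n) ℂ :=
  fun x y => if x = y then (if (x.1, x.2.1) ∈ M then -1 else 1) else 0

/-- One step of the search walk: `U' = S·(I⊗C)·(Q⊗I₅)`. -/
noncomputable def searchOp (n : ℕ) [NeZero n] (l : ℝ) (M : Finset (ZMod n × ZMod n)) :
    Matrix (WalkIdx n) (WalkIdx n) ℂ :=
  shiftOp n * coinOp n l * queryOp n M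

/-- The uniform initial state `|ψ(0)⟩ = (1/n) Σ_{i,j} |i,j⟩ ⊗ |s_c⟩`. -/
noncomputable def psi0 (n : ℕ) (l : ℝ) : WalkIdx n → ℂ :=
  fun x => (1 / (n : ℂ)) * scState l x.2.2

/-- The coin part `|s_cᵃ⟩ = a(|↑⟩+|↓⟩+|←⟩+|→⟩+√l|↺⟩)` of the stationary state. -/
noncomputable def scA (l a : ℝ) : Fin 5 → ℂ :=
  fun c => (a : ℂ) * (if c = 4 then (Real.sqrt l : ℂ) else 1)

/-- The stationary state for the marked block `M = {(0,0),(1,0),(1,1),(1,2)}`: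
`|φ_stat^a⟩ = Σ_{i,j}|i,j⟩|s_cᵃ⟩ − (4+l)a(|0,0,→⟩+|1,0,←⟩+|1,1,↑⟩+|1,2,↓⟩)`. -/
noncomputable def phiStatBlock (n : ℕ) (l a : ℝ) : WalkIdx n → ℂ :=
  fun x => scA l a x.2.2 -
    (if x = ((0 : ZMod n), (0 : ZMod n), (3 : Fin 5)) ∨
        x = ((1 : ZMod n), (0 : ZMod n), (2 : Fin 5)) ∨
        x = ((1 : ZMod n), (1 : ZMod n), (0 : Fin 5)) ∨
        x = ((1 : ZMod n), (2 : ZMod n), (1 : Fin 5))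
     then ((4 + l : ℝ) : ℂ) * (a : ℂ) else 0)

section Aux

open Finset

lemma star_scState (l : ℝ) (c : Fin 5) : star (scState l c) = scState l c := by
  simp only [scState, Complex.star_def]
  split <;> simp [map_div₀]

lemma grover_apply (l : ℝ) (w : Fin 5 → ℂ) (c : Fin 5) :
    ∑ c', groverCoin l c c' * w c'
      = 2 * scState l c * (∑ c', scState l c' * w c') - w c := by
  have h : ∀ c', groverCoin l c c' * w c'
      = 2 * scState l c * (scState l c' * w c') - (if c = c' then w c' else 0) := by
    intro c'
    simp only [groverCoin, Matrix.sub_apply, Matrix.smul_apply, Matrix.vecMulVec_apply,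
      Pi.star_apply, star_scState, Matrix.one_apply, smul_eq_mul]
    split_ifs <;> ring
  rw [Finset.sum_congr rfl fun c' _ => h c', Finset.sum_sub_distrib, ← Finset.mul_sum,
    Finset.sum_ite_eq]
  simp

lemma sqrt4l_ne (l : ℝ) (hl : 0 < l) : ((Real.sqrt (4 + l) : ℝ) : ℂ) ≠ 0 := by
  have : Real.sqrt (4 + l) ≠ 0 := by
    positivity
  exact_mod_cast this

lemma sq_sqrt4l (l : ℝ) (hl : 0 < l) :
    ((Real.sqrt (4 + l) : ℝ) : ℂ) * ((Real.sqrt (4 + l) : ℝ) : ℂ) = 4 + (l : ℂ) := by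
  rw [← Complex.ofReal_mul, Real.mul_self_sqrt (by linarith)]
  push_cast
  ring

lemma sq_sqrtl (l : ℝ) (hl : 0 < l) :
    ((Real.sqrt l : ℝ) : ℂ) * ((Real.sqrt l : ℝ) : ℂ) = (l : ℂ) := by
  rw [← Complex.ofReal_mul, Real.mul_self_sqrt hl.le]

lemma sum_sc_scA (l a : ℝ) (hl : 0 < l) :
    ∑ c', scState l c' * scA l a c' = (a : ℂ) * ((Real.sqrt (4 + l) : ℝ) : ℂ) := by
  have hS := sq_sqrt4l l hl
  have hT := sq_sqrtl l hl
  have hS0 := sqrt4l_ne l hl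
  rw [Fin.sum_univ_five]
  simp only [scState, scA, show ((0:Fin 5) = 4) = False by simp, show ((1:Fin 5) = 4) = False by simp,
    show ((2:Fin 5) = 4) = False by simp, show ((3:Fin 5) = 4) = False by simp,
    show ((4:Fin 5) = 4) = True by simp, if_true, if_false]
  field_simp
  linear_combination (a : ℂ)*hT - (a : ℂ)*hS

lemma sum_sc_delta (l : ℝ) (K : ℂ) (d : Fin 5) (hd : d ≠ 4) :
    ∑ c', scState l c' * (if c' = d then K else 0)
      = K / ((Real.sqrt (4 + l) : ℝ) : ℂ) := by
  simp only [mul_ite, mul_zero, Finset.sum_ite_eq', Finset.mem_univ, if_true]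
  rw [scState, if_neg hd]
  ring

lemma coin_unmarked (l a : ℝ) (hl : 0 < l) (c : Fin 5) :
    ∑ c', groverCoin l c c' * (1 * scA l a c') = scA l a c := by
  simp only [one_mul]
  rw [grover_apply, sum_sc_scA l a hl]
  have hS := sq_sqrt4l l hl
  have hS0 := sqrt4l_ne l hl
  rw [scState, scA]
  split_ifs with h
  · field_simp
    ring
  · field_simp
    ring

lemma coin_marked (l a : ℝ) (hl : 0 < l) (d : Fin 5) (hd : d ≠ 4) (c : Fin 5) :
    ∑ c', groverCoin l c c' *
        (-1 * (scA l a c' - (if c' = d then ((4 + l : ℝ) : ℂ) * (a : ℂ) else 0)))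
      = scA l a c - (if c = d then ((4 + l : ℝ) : ℂ) * (a : ℂ) else 0) := by
  have hS := sq_sqrt4l l hl
  have hS0 := sqrt4l_ne l hl
  rw [grover_apply]
  have hsum : ∑ c', scState l c' *
      (-1 * (scA l a c' - (if c' = d then ((4 + l : ℝ) : ℂ) * (a : ℂ) else 0))) = 0 := by
    have : ∀ c', scState l c' *
        (-1 * (scA l a c' - (if c' = d then ((4 + l : ℝ) : ℂ) * (a : ℂ) else 0)))
        = (scState l c' * (if c' = d then ((4 + l : ℝ) : ℂ) * (a : ℂ) else 0))
          - scState l c' * scA l a c' := by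
      intro c'; ring
    rw [Finset.sum_congr rfl fun c' _ => this c', Finset.sum_sub_distrib,
      sum_sc_delta l _ d hd, sum_sc_scA l a hl]
    have h4 : ((4 + l : ℝ) : ℂ) = 4 + (l : ℂ) := by push_cast; ring
    rw [h4]
    field_simp
    linear_combination -(a:ℂ) * hS
  rw [hsum]
  ring

lemma query_mulVec (n : ℕ) [NeZero n] (M : Finset (ZMod n × ZMod n)) (v : WalkIdx n → ℂ)
    (x : WalkIdx n) :
    (queryOp n M).mulVec v x = (if (x.1, x.2.1) ∈ M then -1 else 1) * v x := by
  simp [Matrix.mulVec, queryOp, dotProduct, ite_mul, Finset.sum_ite_eq]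

lemma coin_mulVec (n : ℕ) [NeZero n] (l : ℝ) (w : WalkIdx n → ℂ) (x : WalkIdx n) :
    (coinOp n l).mulVec w x
      = ∑ c', groverCoin l x.2.2 c' * w (x.1, x.2.1, c') := by
  obtain ⟨i, j, c⟩ := x
  simp [Matrix.mulVec, coinOp, dotProduct, Fintype.sum_prod_type, ite_mul,
    ite_and, Finset.sum_ite_irrel, Finset.sum_ite_eq, Finset.sum_const_zero]

lemma shiftIdx_invol (n : ℕ) (x : WalkIdx n) : shiftIdx n (shiftIdx n x) = x := by
  obtain ⟨i, j, c⟩ := x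
  fin_cases c <;> simp [shiftIdx]

lemma shift_mulVec (n : ℕ) [NeZero n] (v : WalkIdx n → ℂ) (x : WalkIdx n) :
    (shiftOp n).mulVec v x = v (shiftIdx n x) := by
  have key : ∀ y, (x = shiftIdx n y) ↔ (shiftIdx n x = y) := fun y =>
    ⟨fun h => by rw [h, shiftIdx_invol], fun h => by rw [← h, shiftIdx_invol]⟩
  simp only [Matrix.mulVec, shiftOp, dotProduct, ite_mul, one_mul, zero_mul, key]
  rw [Finset.sum_ite_eq]
  simp

lemma phi_shift (n : ℕ) (l a : ℝ) (x : WalkIdx n) :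
    phiStatBlock n l a (shiftIdx n x) = phiStatBlock n l a x := by
  obtain ⟨i, j, c⟩ := x
  have hj1 : (j + 1 = (2 : ZMod n)) ↔ (j = 1) :=
    ⟨fun h => by linear_combination h, fun h => by linear_combination h⟩
  have hj2 : (j - 1 = (1 : ZMod n)) ↔ (j = 2) :=
    ⟨fun h => by linear_combination h, fun h => by linear_combination h⟩
  have hi1 : (i - 1 = (0 : ZMod n)) ↔ (i = 1) :=
    ⟨fun h => by linear_combination h, fun h => by linear_combination h⟩
  have hi2 : (i + 1 = (1 : ZMod n)) ↔ (i = 0) :=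
    ⟨fun h => by linear_combination h, fun h => by linear_combination h⟩
  fin_cases c <;>
    simp [shiftIdx, phiStatBlock, scA, Prod.ext_iff, hj1, hj2, hi1, hi2, and_comm]

end Aux

lemma CQ_fixed (n : ℕ) [NeZero n] (hn : 4 ≤ n) (l a : ℝ) (hl : 0 < l) :
    (coinOp n l).mulVec
      ((queryOp n {((0 : ZMod n), (0 : ZMod n)), (1, 0), (1, 1), (1, 2)}).mulVec
        (phiStatBlock n l a)) = phiStatBlock n l a := by
  have key : ∀ p q : ℕ, p < n → q < n → (p : ZMod n) = (q : ZMod n) → p = q := by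
    intro p q hp hq h
    rw [← ZMod.val_cast_of_lt hp, ← ZMod.val_cast_of_lt hq, h]
  have h01 : ((0 : ZMod n)) ≠ 1 := fun h => by
    have := key 0 1 (by omega) (by omega) (by exact_mod_cast h); omega
  have h02 : ((0 : ZMod n)) ≠ 2 := fun h => by
    have := key 0 2 (by omega) (by omega) (by exact_mod_cast h); omega
  have h12 : ((1 : ZMod n)) ≠ 2 := fun h => by
    have := key 1 2 (by omega) (by omega) (by exact_mod_cast h); omega
  have h10 := h01.symm
  have h20 := h02.symm
  have h21 := h12.symm
  funext x
  obtain ⟨i, j, c⟩ := x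
  rw [coin_mulVec]
  simp only [query_mulVec]
  by_cases hij : (i, j) ∈ ({((0 : ZMod n), (0 : ZMod n)), (1, 0), (1, 1), (1, 2)} :
      Finset (ZMod n × ZMod n))
  · simp only [Finset.mem_insert, Finset.mem_singleton, Prod.mk.injEq] at hij
    have hmem : ((i, j) ∈ ({((0 : ZMod n), (0 : ZMod n)), (1, 0), (1, 1), (1, 2)} :
        Finset (ZMod n × ZMod n))) = True := by
      simp only [Finset.mem_insert, Finset.mem_singleton, Prod.mk.injEq]
      exact eq_true hij
    rcases hij with ⟨hi, hj⟩ | ⟨hi, hj⟩ | ⟨hi, hj⟩ | ⟨hi, hj⟩ <;> subst hi <;> subst hj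
    · have hv : ∀ c' : Fin 5, phiStatBlock n l a ((0 : ZMod n), (0 : ZMod n), c')
          = scA l a c' - (if c' = 3 then ((4 + l : ℝ) : ℂ) * (a : ℂ) else 0) := by
        intro c'
        simp only [phiStatBlock, Prod.mk.injEq]
        simp [h01]
      simp only [hv, hmem, if_true]
      exact coin_marked l a hl 3 (by decide) c
    · have hv : ∀ c' : Fin 5, phiStatBlock n l a ((1 : ZMod n), (0 : ZMod n), c')
          = scA l a c' - (if c' = 2 then ((4 + l : ℝ) : ℂ) * (a : ℂ) else 0) := by
        intro c'
        simp only [phiStatBlock, Prod.mk.injEq]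
        simp [h10, h01, h02]
      simp only [hv, hmem, if_true]
      exact coin_marked l a hl 2 (by decide) c
    · have hv : ∀ c' : Fin 5, phiStatBlock n l a ((1 : ZMod n), (1 : ZMod n), c')
          = scA l a c' - (if c' = 0 then ((4 + l : ℝ) : ℂ) * (a : ℂ) else 0) := by
        intro c'
        simp only [phiStatBlock, Prod.mk.injEq]
        simp [h10, h12]
      simp only [hv, hmem, if_true]
      exact coin_marked l a hl 0 (by decide) c
    · have hv : ∀ c' : Fin 5, phiStatBlock n l a ((1 : ZMod n), (2 : ZMod n), c')
          = scA l a c' - (if c' = 1 then ((4 + l : ℝ) : ℂ) * (a : ℂ) else 0) := by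
        intro c'
        simp only [phiStatBlock, Prod.mk.injEq]
        simp [h10, h20, h21]
      simp only [hv, hmem, if_true]
      exact coin_marked l a hl 1 (by decide) c
  · have hmem : ((i, j) ∈ ({((0 : ZMod n), (0 : ZMod n)), (1, 0), (1, 1), (1, 2)} :
        Finset (ZMod n × ZMod n))) = False := eq_false hij
    simp only [Finset.mem_insert, Finset.mem_singleton, Prod.mk.injEq, not_or] at hij
    obtain ⟨ne1, ne2, ne3, ne4⟩ := hij
    have hv : ∀ c' : Fin 5, phiStatBlock n l a (i, j, c') = scA l a c' := by
      intro c'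
      simp only [phiStatBlock, Prod.mk.injEq]
      rw [if_neg, sub_zero]
      rintro (⟨h1, h2, _⟩ | ⟨h1, h2, _⟩ | ⟨h1, h2, _⟩ | ⟨h1, h2, _⟩)
      exacts [ne1 ⟨h1, h2⟩, ne2 ⟨h1, h2⟩, ne3 ⟨h1, h2⟩, ne4 ⟨h1, h2⟩]
    simp only [hv, hmem, if_false]
    exact coin_unmarked l a hl c

/-- For the marked set `M = {(0,0),(1,0),(1,1),(1,2)}` on the `n×n` torus
(`n ≥ 4`), the stationary state is fixed by the search step. -/
theorem phiStatBlock_fixed (n : ℕ) [NeZero n] (hn : 4 ≤ n) (l a : ℝ) (hl : 0 < l) :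
    (searchOp n l {((0 : ZMod n), (0 : ZMod n)), (1, 0), (1, 1), (1, 2)}).mulVec
        (phiStatBlock n l a) = phiStatBlock n l a := by
  rw [searchOp, ← Matrix.mulVec_mulVec, ← Matrix.mulVec_mulVec,
    CQ_fixed n hn l a hl]
  funext x
  rw [shift_mulVec, phi_shift]
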